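/- For integers n and d with 5 ≤ d ≤ n - 2, the graph G_{n,d} is bridgeless. -/

import Mathlib

open SimpleGraph

/-- `R` is an orientation of the simple graph `G`: every arc of `R` lies on an edge of `G`,
and every edge of `G` receives exactly one of its two possible directions. -/
def IsOrientation {V : Type*} (G : SimpleGraph V) (R : V → V → Prop) : Prop :=
  (∀ u v, R u v → G.Adj u v) ∧ ∀ u v, G.Adj u v → (R u v ↔ ¬ R v u)

/-- `RelPow R k u v` : there is a directed walk of length `k` from `u` to `v`. -/
def RelPow {V : Type*} (R : V → V → Prop) : ℕ → V → V → Prop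
  | 0, u, v => u = v
  | n + 1, u, v => ∃ w, R u w ∧ RelPow R n w v

/-- The digraph `R` has diameter at most `d`: any vertex can reach any other by a
directed walk of length at most `d`. -/
def DiamLE {V : Type*} (R : V → V → Prop) (d : ℕ) : Prop :=
  ∀ u v, ∃ k ≤ d, RelPow R k u v

/-- A digraph is strongly connected if every vertex can reach every other. -/
def StronglyConnected {V : Type*} (R : V → V → Prop) : Prop :=
  ∀ u v, Relation.ReflTransGen R u v

/-- A graph is bridgeless if it is connected and contains no bridge. -/
def Bridgeless {V : Type*} (G : SimpleGraph V) : Prop :=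
  G.Connected ∧ ∀ e, ¬ G.IsBridge e

/-- The graph `G_{n,d}`: the path `u_1 … u_d` is the set of indices `0,…,d-1`,
the clique `K_{n-d-1}` is the set of indices `d,…,n-2`, both endpoints `0` and `d-1`
of the path are joined to all clique vertices, and the extra vertex `u_3'` is the
index `n-1`, joined to `u_2, u_3, u_4`, i.e. to indices `1, 2, 3`. -/
def Gnd (n d : ℕ) : SimpleGraph (Fin n) :=
  SimpleGraph.fromRel (fun i j =>
    ((i : ℕ) + 1 = (j : ℕ) ∧ (j : ℕ) < d) ∨
    (d ≤ (i : ℕ) ∧ (i : ℕ) < n - 1 ∧ d ≤ (j : ℕ) ∧ (j : ℕ) < n - 1) ∨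
    (((i : ℕ) = 0 ∨ (i : ℕ) = d - 1) ∧ d ≤ (j : ℕ) ∧ (j : ℕ) < n - 1) ∨
    ((i : ℕ) = n - 1 ∧ ((j : ℕ) = 1 ∨ (j : ℕ) = 2 ∨ (j : ℕ) = 3)))

/-- The graph `H_{n,n-2}`: the cycle `u_1 … u_{n-1} u_1` is the set of indices
`0,…,n-2` in cyclic order, and the extra vertex `u_3'` is the index `n-1`,
joined to `u_2, u_3, u_4`, i.e. to indices `1, 2, 3`. -/
def Hgraph (n : ℕ) : SimpleGraph (Fin n) :=
  SimpleGraph.fromRel (fun i j =>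
    ((i : ℕ) + 1 = (j : ℕ) ∧ (j : ℕ) ≤ n - 2) ∨
    ((i : ℕ) = 0 ∧ (j : ℕ) = n - 2) ∨
    ((i : ℕ) = n - 1 ∧ ((j : ℕ) = 1 ∨ (j : ℕ) = 2 ∨ (j : ℕ) = 3)))


def fv (n : ℕ) (hn : 0 < n) (k : ℕ) : Fin n := ⟨min k (n-1), by omega⟩

@[simp] lemma fv_val (n : ℕ) (hn : 0 < n) (k : ℕ) : ((fv n hn k : Fin n) : ℕ) = min k (n-1) := rfl

lemma reach_chain {V : Type*} (H : SimpleGraph V) (f : ℕ → V) (a : ℕ) :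
    ∀ b, a ≤ b → (∀ k, a ≤ k → k < b → H.Adj (f k) (f (k+1))) → H.Reachable (f a) (f b) := by
  intro b hab
  induction b, hab using Nat.le_induction with
  | base => exact fun _ => Reachable.refl _
  | succ b hb ih =>
    intro h
    exact (ih (fun k hk hk' => h k hk (by omega))).trans (h b hb (by omega)).reachable

lemma gnd_adj {n d : ℕ} (hd : 5 ≤ d) (hdn : d + 2 ≤ n) {u v : Fin n}
    (h : ((u:ℕ)+1 = (v:ℕ) ∧ (v:ℕ) < d) ∨
         (((u:ℕ)=0 ∨ (u:ℕ)=d-1) ∧ d ≤ (v:ℕ) ∧ (v:ℕ) < n-1) ∨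
         ((u:ℕ)=n-1 ∧ ((v:ℕ)=1 ∨ (v:ℕ)=2 ∨ (v:ℕ)=3))) :
    (Gnd n d).Adj u v := by
  have hne : (u:ℕ) ≠ (v:ℕ) := by omega
  rw [Gnd, fromRel_adj]
  exact ⟨fun e => hne (congrArg Fin.val e), Or.inl (by tauto)⟩

lemma sym2_ne {n : ℕ} {u v a b : Fin n}
    (h : ¬(((u:ℕ)=(a:ℕ) ∧ (v:ℕ)=(b:ℕ)) ∨ ((u:ℕ)=(b:ℕ) ∧ (v:ℕ)=(a:ℕ)))) :
    s(u,v) ≠ s(a,b) := by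
  intro e
  rw [Sym2.eq_iff] at e
  apply h
  rcases e with ⟨rfl, rfl⟩ | ⟨rfl, rfl⟩ <;> simp

lemma del_adj {V : Type*} {G : SimpleGraph V} {e : Sym2 V} {u v : V}
    (h : G.Adj u v) (hne : s(u,v) ≠ e) : (G \ fromEdgeSet {e}).Adj u v := by
  rw [sdiff_adj]
  refine ⟨h, ?_⟩
  rw [fromEdgeSet_adj]
  rintro ⟨h1, -⟩
  exact hne (Set.mem_singleton_iff.mp h1)


lemma gnd_key (n d : ℕ) (hd : 5 ≤ d) (hdn : d + 2 ≤ n) (a b : Fin n)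
    (h : ((a:ℕ)+1 = (b:ℕ) ∧ (b:ℕ) < d) ∨
         (d ≤ (a:ℕ) ∧ (a:ℕ) < n-1 ∧ d ≤ (b:ℕ) ∧ (b:ℕ) < n-1) ∨
         (((a:ℕ)=0 ∨ (a:ℕ)=d-1) ∧ d ≤ (b:ℕ) ∧ (b:ℕ) < n-1) ∨
         ((a:ℕ)=n-1 ∧ ((b:ℕ)=1 ∨ (b:ℕ)=2 ∨ (b:ℕ)=3))) :
    (Gnd n d \ fromEdgeSet {s(a,b)}).Reachable a b := by
  have hn : 0 < n := by omega
  set H := Gnd n d \ fromEdgeSet {s(a,b)} with hH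
  set f := fv n hn with hf
  have ha : a < n := a.isLt
  have hb : b < n := b.isLt
  have hfa : a = f (a:ℕ) := Fin.ext (by simp [hf]; omega)
  have hfb : b = f (b:ℕ) := Fin.ext (by simp [hf]; omega)
  have step : ∀ u v : Fin n,
      (((u:ℕ)+1 = (v:ℕ) ∧ (v:ℕ) < d) ∨
       (((u:ℕ)=0 ∨ (u:ℕ)=d-1) ∧ d ≤ (v:ℕ) ∧ (v:ℕ) < n-1) ∨
       ((u:ℕ)=n-1 ∧ ((v:ℕ)=1 ∨ (v:ℕ)=2 ∨ (v:ℕ)=3))) →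
      (¬(((u:ℕ)=(a:ℕ) ∧ (v:ℕ)=(b:ℕ)) ∨ ((u:ℕ)=(b:ℕ) ∧ (v:ℕ)=(a:ℕ)))) →
      H.Adj u v := fun u v h1 h2 => del_adj (gnd_adj hd hdn h1) (sym2_ne h2)
  rcases h with ⟨h1, h2⟩ | ⟨h1, h2, h3, h4⟩ | ⟨h1, h2, h3⟩ | ⟨h1, h2⟩
  · -- path edge (i, i+1), i+1 < d: go i → … → 0 → d → d-1 → … → i+1
    have r1 : H.Reachable (f 0) (f (a:ℕ)) := by
      refine reach_chain H f 0 _ (by omega) (fun k hk hk' => step _ _ ?_ ?_)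
      · simp only [hf, fv_val]; omega
      · simp only [hf, fv_val]; omega
    have r2 : H.Adj (f 0) (f d) := by
      refine step _ _ ?_ ?_ <;> [skip; skip] <;> simp only [hf, fv_val] <;> omega
    have r3 : H.Adj (f (d-1)) (f d) := by
      refine step _ _ ?_ ?_ <;> simp only [hf, fv_val] <;> omega
    have r4 : H.Reachable (f ((a:ℕ)+1)) (f (d-1)) := by
      refine reach_chain H f _ _ (by omega) (fun k hk hk' => step _ _ ?_ ?_) <;>
        simp only [hf, fv_val] <;> omega
    rw [hfa, hfb, ← h1]
    exact r1.symm.trans (r2.reachable.trans (r3.reachable.symm.trans r4.symm))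
  · -- clique edge: go a → 0 → b  (or a = b)
    by_cases hab : a = b
    · rw [hab]
    have hab' : (a:ℕ) ≠ (b:ℕ) := fun e => hab (Fin.ext e)
    have r1 : H.Adj (f 0) a := by
      refine step _ _ ?_ ?_ <;> simp only [hf, fv_val] <;> omega
    have r2 : H.Adj (f 0) b := by
      refine step _ _ ?_ ?_ <;> simp only [hf, fv_val] <;> omega
    exact r1.reachable.symm.trans r2.reachable
  · -- endpoint-to-clique edge
    rcases h1 with h1 | h1
    · -- a = 0 : go 0 → 1 → … → d-1 → b
      have r1 : H.Reachable (f 0) (f (d-1)) := by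
        refine reach_chain H f 0 _ (by omega) (fun k hk hk' => step _ _ ?_ ?_) <;>
          simp only [hf, fv_val] <;> omega
      have r2 : H.Adj (f (d-1)) b := by
        refine step _ _ ?_ ?_ <;> simp only [hf, fv_val] <;> omega
      have : a = f 0 := Fin.ext (by simp [hf]; omega)
      rw [this]
      exact r1.trans r2.reachable
    · -- a = d-1 : go d-1 → … → 0 → b
      have r1 : H.Reachable (f 0) (f (d-1)) := by
        refine reach_chain H f 0 _ (by omega) (fun k hk hk' => step _ _ ?_ ?_) <;>
          simp only [hf, fv_val] <;> omega
      have r2 : H.Adj (f 0) b := by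
        refine step _ _ ?_ ?_ <;> simp only [hf, fv_val] <;> omega
      have : a = f (d-1) := Fin.ext (by simp [hf]; omega)
      rw [this]
      exact r1.symm.trans r2.reachable
  · -- extra vertex edges
    rcases h2 with h2 | h2 | h2
    · -- b = 1 : a → 2 → 1
      have r1 : H.Adj a (f 2) := by
        refine step _ _ ?_ ?_ <;> simp only [hf, fv_val] <;> omega
      have r2 : H.Adj b (f 2) := by
        refine step _ _ ?_ ?_ <;> simp only [hf, fv_val] <;> omega
      exact r1.reachable.trans r2.reachable.symm
    · -- b = 2 : a → 1 → 2
      have r1 : H.Adj a (f 1) := by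
        refine step _ _ ?_ ?_ <;> simp only [hf, fv_val] <;> omega
      have r2 : H.Adj (f 1) b := by
        refine step _ _ ?_ ?_ <;> simp only [hf, fv_val] <;> omega
      exact r1.reachable.trans r2.reachable
    · -- b = 3 : a → 2 → 3
      have r1 : H.Adj a (f 2) := by
        refine step _ _ ?_ ?_ <;> simp only [hf, fv_val] <;> omega
      have r2 : H.Adj (f 2) b := by
        refine step _ _ ?_ ?_ <;> simp only [hf, fv_val] <;> omega
      exact r1.reachable.trans r2.reachable


theorem stmt_3 (n d : ℕ) (hd : 5 ≤ d) (hdn : d + 2 ≤ n) :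
    Bridgeless (Gnd n d) := by
  have hn : 0 < n := by omega
  set f := fv n hn with hf
  have hconn : (Gnd n d).Connected := ?_
  swap
  · rw [connected_iff]
    refine ⟨?_, ⟨f 0⟩⟩
    have hr : ∀ v : Fin n, (Gnd n d).Reachable (f 0) v := by
      intro v
      have hv : (v:ℕ) < n := v.isLt
      rcases lt_or_ge (v:ℕ) d with h | h
      · have : v = f (v:ℕ) := Fin.ext (by simp [hf]; omega)
        rw [this]
        refine reach_chain _ f 0 _ (by omega) (fun k hk hk' => gnd_adj hd hdn ?_)
        simp only [hf, fv_val]; omega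
      · rcases lt_or_ge (v:ℕ) (n-1) with h' | h'
        · exact (gnd_adj hd hdn (by simp only [hf, fv_val]; omega :
            ((f 0 : Fin n):ℕ)+1 = (v:ℕ) ∧ (v:ℕ) < d ∨
            (((f 0 : Fin n):ℕ)=0 ∨ ((f 0 : Fin n):ℕ)=d-1) ∧ d ≤ (v:ℕ) ∧ (v:ℕ) < n-1 ∨
            ((f 0 : Fin n):ℕ)=n-1 ∧ ((v:ℕ)=1 ∨ (v:ℕ)=2 ∨ (v:ℕ)=3))).reachable
        · have h1 : (Gnd n d).Adj (f 0) (f 1) := by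
            refine gnd_adj hd hdn ?_; simp only [hf, fv_val]; omega
          have h2 : (Gnd n d).Adj v (f 1) := by
            refine gnd_adj hd hdn ?_; simp only [hf, fv_val]; omega
          exact h1.reachable.trans h2.reachable.symm
    intro u v
    exact (hr u).symm.trans (hr v)
  · refine ⟨hconn, fun e => ?_⟩
    induction e using Sym2.ind with
    | _ a b =>
      rw [isBridge_iff]
      intro hnr
      by_cases hadj : (Gnd n d).Adj a b
      swap
      · apply hnr
        rw [deleteEdges_eq_self.mpr (Set.disjoint_singleton_right.mpr hadj)]
        exact hconn.preconnected a b
      apply hnr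
      rw [Gnd, fromRel_adj] at hadj
      rcases hadj.2 with h | h
      · exact gnd_key n d hd hdn a b h
      · have := gnd_key n d hd hdn b a h
        rw [show s(b,a) = s(a,b) from Sym2.eq_swap] at this
        exact this.symm
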